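/- For every R > 0 and every x' ∈ (−R, R), the function (x, t) ↦ f₁(x, t; x') satisfies the one-dimensional heat equation ∂f/∂t(x, t) = (1/2) ∂²f/∂x²(x, t) at every point (x, t) with x ∈ (−R, R) and t > 0; in particular the time derivative and the second spatial derivative of the series exist at all such points. -/

import Mathlib

open Real Filter Topology MeasureTheory

/-- Dirichlet heat kernel of the interval `(-R, R)` with source `x'`:
`f₁ R x' x t = ∑_{k≥1} (1/R) sin(kπ(x'+R)/(2R)) sin(kπ(x+R)/(2R)) exp(-λ_k t/2)`
with `λ_k = (kπ)²/(4R²)`. -/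
noncomputable def f₁ (R x' x t : ℝ) : ℝ :=
  ∑' k : ℕ, (1 / R) * Real.sin (((k : ℝ) + 1) * π * (x' + R) / (2 * R)) *
    Real.sin (((k : ℝ) + 1) * π * (x + R) / (2 * R)) *
    Real.exp (-((((k : ℝ) + 1) * π) ^ 2 / (4 * R ^ 2)) * t / 2)

lemma hk_summable_aux (R : ℝ) (hR : 0 < R) (c : ℝ) (hc : 0 < c) (m : ℕ) :
    Summable fun k : ℕ => ((k : ℝ) + 1) ^ m *
      Real.exp (-((((k : ℝ) + 1) * π) ^ 2 / (4 * R ^ 2)) * c) := by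
  have hπ := Real.pi_pos
  set d : ℝ := π ^ 2 / (4 * R ^ 2) * c with hd
  have hd0 : 0 < d := by positivity
  have hr1 : Real.exp (-d) < 1 := by rw [Real.exp_lt_one_iff]; linarith
  have hbase : Summable fun n : ℕ => (n : ℝ) ^ m * Real.exp (-d) ^ n :=
    summable_pow_mul_geometric_of_norm_lt_one m
      (by rwa [Real.norm_eq_abs, abs_of_pos (Real.exp_pos _)])
  have hshift : Summable fun k : ℕ => ((k : ℝ) + 1) ^ m * Real.exp (-d) ^ (k + 1) := by
    have := (summable_nat_add_iff 1).2 hbase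
    simpa using this
  refine hshift.of_nonneg_of_le (fun k => by positivity) (fun k => ?_)
  have hk0 : (0 : ℝ) ≤ (k : ℝ) := Nat.cast_nonneg k
  have h1 : Real.exp (-((((k : ℝ) + 1) * π) ^ 2 / (4 * R ^ 2)) * c) ≤ Real.exp (-d) ^ (k + 1) := by
    rw [← Real.exp_nat_mul, Real.exp_le_exp]
    push_cast
    have key : (((k : ℝ) + 1) * π) ^ 2 / (4 * R ^ 2) * c = ((k : ℝ) + 1) ^ 2 * d := by
      rw [hd]; field_simp
    have : ((k : ℝ) + 1) * d ≤ (((k : ℝ) + 1) * π) ^ 2 / (4 * R ^ 2) * c := by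
      rw [key]; nlinarith [mul_nonneg (mul_nonneg hk0 (by linarith : (0:ℝ) ≤ (k:ℝ)+1)) hd0.le]
    linarith
  exact mul_le_mul_of_nonneg_left h1 (by positivity)

lemma hk_abs_helper {a s m e B : ℝ} (ha : 0 ≤ a) (hs : |s| ≤ 1) (hm : |m| ≤ B) (he : 0 ≤ e) :
    |a * s * m * e| ≤ a * B * e := by
  have hB : 0 ≤ B := le_trans (abs_nonneg m) hm
  calc |a * s * m * e| = a * |s| * |m| * e := by
        rw [abs_mul, abs_mul, abs_mul, abs_of_nonneg ha, abs_of_nonneg he]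
    _ ≤ a * 1 * B * e := by gcongr
    _ = a * B * e := by ring

lemma hk_abs_helper2 {a s s2 m B : ℝ} (ha : 0 ≤ a) (hs : |s| ≤ 1) (hs2 : |s2| ≤ 1)
    (hm : |m| ≤ B) : |a * s * s2 * m| ≤ a * B := by
  have hB : 0 ≤ B := le_trans (abs_nonneg m) hm
  calc |a * s * s2 * m| = a * |s| * |s2| * |m| := by
        rw [abs_mul, abs_mul, abs_mul, abs_of_nonneg ha]
    _ ≤ a * 1 * 1 * B := by gcongr
    _ = a * B := by ring

/-- The Dirichlet heat kernel satisfies the one-dimensional heat equation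
`∂f/∂t = (1/2) ∂²f/∂x²` at every interior point and every positive time;
in particular the time derivative, the first and the second spatial derivative
of the series exist at all such points. -/
theorem f₁_satisfies_heat_equation (R : ℝ) (hR : 0 < R) (x' : ℝ)
    (hx' : x' ∈ Set.Ioo (-R) R) (x t : ℝ) (hx : x ∈ Set.Ioo (-R) R) (ht : 0 < t) :
    DifferentiableAt ℝ (fun s => f₁ R x' x s) t ∧
    DifferentiableAt ℝ (fun y => f₁ R x' y t) x ∧
    DifferentiableAt ℝ (deriv (fun y => f₁ R x' y t)) x ∧
    deriv (fun s => f₁ R x' x s) t =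
      (1 / 2) * deriv (deriv (fun y => f₁ R x' y t)) x := by
  have hπ := Real.pi_pos
  have hRne : R ≠ 0 := ne_of_gt hR
  have S0 := hk_summable_aux R hR (t/2) (by positivity) 0
  have S1 := hk_summable_aux R hR (t/2) (by positivity) 1
  have S2 := hk_summable_aux R hR (t/2) (by positivity) 2
  have S2' := hk_summable_aux R hR (t/2/2) (by positivity) 2
  -- derivative of the inner linear map (spatial)
  have hinner : ∀ (k : ℕ) (y : ℝ), HasDerivAt
      (fun y : ℝ => ((k:ℝ)+1) * π * (y + R) / (2*R)) (((k:ℝ)+1) * π / (2*R)) y := by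
    intro k y
    have h := (((hasDerivAt_id y).add_const R).const_mul (((k:ℝ)+1) * π)).div_const (2*R)
    exact h.congr_deriv (by ring)
  -- term-by-term spatial derivatives
  have hF : ∀ (k : ℕ) (y : ℝ), HasDerivAt
      (fun y => 1/R * Real.sin (((k:ℝ)+1) * π * (x'+R) / (2*R)) *
        Real.sin (((k:ℝ)+1) * π * (y+R) / (2*R)) *
        Real.exp (-((((k:ℝ)+1) * π) ^ 2 / (4*R^2)) * t / 2))
      (1/R * Real.sin (((k:ℝ)+1) * π * (x'+R) / (2*R)) *
        (Real.cos (((k:ℝ)+1) * π * (y+R) / (2*R)) * (((k:ℝ)+1) * π / (2*R))) *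
        Real.exp (-((((k:ℝ)+1) * π) ^ 2 / (4*R^2)) * t / 2)) y := by
    intro k y
    exact (((Real.hasDerivAt_sin _).comp y (hinner k y)).const_mul _).mul_const _
  have hF' : ∀ (k : ℕ) (y : ℝ), HasDerivAt
      (fun y => 1/R * Real.sin (((k:ℝ)+1) * π * (x'+R) / (2*R)) *
        (Real.cos (((k:ℝ)+1) * π * (y+R) / (2*R)) * (((k:ℝ)+1) * π / (2*R))) *
        Real.exp (-((((k:ℝ)+1) * π) ^ 2 / (4*R^2)) * t / 2))
      (1/R * Real.sin (((k:ℝ)+1) * π * (x'+R) / (2*R)) *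
        (-Real.sin (((k:ℝ)+1) * π * (y+R) / (2*R)) * (((k:ℝ)+1) * π / (2*R)) *
          (((k:ℝ)+1) * π / (2*R))) *
        Real.exp (-((((k:ℝ)+1) * π) ^ 2 / (4*R^2)) * t / 2)) y := by
    intro k y
    exact ((((Real.hasDerivAt_cos _).comp y (hinner k y)).mul_const _).const_mul _).mul_const _
  -- summable bounds
  have hu1 : Summable fun k : ℕ => 1/R * (((k:ℝ)+1) * π / (2*R)) *
      Real.exp (-((((k:ℝ)+1) * π) ^ 2 / (4*R^2)) * t / 2) := by
    have heq : (fun k : ℕ => 1/R * (((k:ℝ)+1) * π / (2*R)) *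
        Real.exp (-((((k:ℝ)+1) * π) ^ 2 / (4*R^2)) * t / 2)) =
        fun k : ℕ => (π / (2*R^2)) * (((k:ℝ)+1) ^ 1 *
          Real.exp (-((((k:ℝ)+1) * π) ^ 2 / (4*R^2)) * (t/2))) := by
      funext k; rw [mul_div_assoc]; ring
    rw [heq]; exact S1.mul_left _
  have hu2 : Summable fun k : ℕ => 1/R * ((((k:ℝ)+1) * π / (2*R)) * (((k:ℝ)+1) * π / (2*R))) *
      Real.exp (-((((k:ℝ)+1) * π) ^ 2 / (4*R^2)) * t / 2) := by
    have heq : (fun k : ℕ => 1/R * ((((k:ℝ)+1) * π / (2*R)) * (((k:ℝ)+1) * π / (2*R))) *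
        Real.exp (-((((k:ℝ)+1) * π) ^ 2 / (4*R^2)) * t / 2)) =
        fun k : ℕ => (π^2 / (4*R^3)) * (((k:ℝ)+1) ^ 2 *
          Real.exp (-((((k:ℝ)+1) * π) ^ 2 / (4*R^2)) * (t/2))) := by
      funext k; rw [mul_div_assoc]; field_simp; ring
    rw [heq]; exact S2.mul_left _
  -- bounds on derivatives
  have hbound1 : ∀ (k : ℕ) (y : ℝ),
      ‖1/R * Real.sin (((k:ℝ)+1) * π * (x'+R) / (2*R)) *
        (Real.cos (((k:ℝ)+1) * π * (y+R) / (2*R)) * (((k:ℝ)+1) * π / (2*R))) *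
        Real.exp (-((((k:ℝ)+1) * π) ^ 2 / (4*R^2)) * t / 2)‖ ≤
      1/R * (((k:ℝ)+1) * π / (2*R)) *
        Real.exp (-((((k:ℝ)+1) * π) ^ 2 / (4*R^2)) * t / 2) := by
    intro k y
    rw [Real.norm_eq_abs]
    refine hk_abs_helper (by positivity) (Real.abs_sin_le_one _) ?_ (Real.exp_pos _).le
    rw [abs_mul]
    calc |Real.cos (((k:ℝ)+1) * π * (y+R) / (2*R))| * |((k:ℝ)+1) * π / (2*R)| ≤
        1 * |((k:ℝ)+1) * π / (2*R)| := by gcongr; exact Real.abs_cos_le_one _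
      _ = ((k:ℝ)+1) * π / (2*R) := by rw [one_mul, abs_of_pos (by positivity)]
  have hbound2 : ∀ (k : ℕ) (y : ℝ),
      ‖1/R * Real.sin (((k:ℝ)+1) * π * (x'+R) / (2*R)) *
        (-Real.sin (((k:ℝ)+1) * π * (y+R) / (2*R)) * (((k:ℝ)+1) * π / (2*R)) *
          (((k:ℝ)+1) * π / (2*R))) *
        Real.exp (-((((k:ℝ)+1) * π) ^ 2 / (4*R^2)) * t / 2)‖ ≤
      1/R * ((((k:ℝ)+1) * π / (2*R)) * (((k:ℝ)+1) * π / (2*R))) *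
        Real.exp (-((((k:ℝ)+1) * π) ^ 2 / (4*R^2)) * t / 2) := by
    intro k y
    rw [Real.norm_eq_abs]
    refine hk_abs_helper (by positivity) (Real.abs_sin_le_one _) ?_ (Real.exp_pos _).le
    rw [abs_mul, abs_mul, abs_neg]
    calc |Real.sin (((k:ℝ)+1) * π * (y+R) / (2*R))| * |((k:ℝ)+1) * π / (2*R)| *
          |((k:ℝ)+1) * π / (2*R)| ≤
        1 * |((k:ℝ)+1) * π / (2*R)| * |((k:ℝ)+1) * π / (2*R)| := by
          gcongr; exact Real.abs_sin_le_one _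
      _ = ((k:ℝ)+1) * π / (2*R) * (((k:ℝ)+1) * π / (2*R)) := by
          rw [one_mul, abs_of_pos (show (0:ℝ) < ((k:ℝ)+1) * π / (2*R) by positivity)]
  -- summability of the series itself at the point x (also = time series at t)
  have hS0' : Summable fun k : ℕ => 1/R * Real.sin (((k:ℝ)+1) * π * (x'+R) / (2*R)) *
      Real.sin (((k:ℝ)+1) * π * (x+R) / (2*R)) *
      Real.exp (-((((k:ℝ)+1) * π) ^ 2 / (4*R^2)) * t / 2) := by
    have hg : Summable fun k : ℕ => 1/R * (((k:ℝ)+1) ^ 0 *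
        Real.exp (-((((k:ℝ)+1) * π) ^ 2 / (4*R^2)) * (t/2))) := S0.mul_left _
    refine Summable.of_norm_bounded hg (fun k => ?_)
    rw [Real.norm_eq_abs]
    have h := hk_abs_helper2 (a := 1/R)
      (s := Real.sin (((k:ℝ)+1) * π * (x'+R) / (2*R)))
      (s2 := Real.sin (((k:ℝ)+1) * π * (x+R) / (2*R)))
      (m := Real.exp (-((((k:ℝ)+1) * π) ^ 2 / (4*R^2)) * t / 2))
      (B := Real.exp (-((((k:ℝ)+1) * π) ^ 2 / (4*R^2)) * (t/2)))
      (show (0:ℝ) ≤ 1/R by positivity) (Real.abs_sin_le_one _) (Real.abs_sin_le_one _)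
      (le_of_eq (by rw [Real.abs_exp, mul_div_assoc]))
    calc _ ≤ 1/R * Real.exp (-((((k:ℝ)+1) * π) ^ 2 / (4*R^2)) * (t/2)) := h
      _ = 1/R * (((k:ℝ)+1) ^ 0 * Real.exp (-((((k:ℝ)+1) * π) ^ 2 / (4*R^2)) * (t/2))) := by
          rw [pow_zero, one_mul]
  -- spatial derivative of the sum, everywhere
  have key1 : ∀ y : ℝ, HasDerivAt
      (fun z => ∑' k : ℕ, 1/R * Real.sin (((k:ℝ)+1) * π * (x'+R) / (2*R)) *
        Real.sin (((k:ℝ)+1) * π * (z+R) / (2*R)) *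
        Real.exp (-((((k:ℝ)+1) * π) ^ 2 / (4*R^2)) * t / 2))
      (∑' k : ℕ, 1/R * Real.sin (((k:ℝ)+1) * π * (x'+R) / (2*R)) *
        (Real.cos (((k:ℝ)+1) * π * (y+R) / (2*R)) * (((k:ℝ)+1) * π / (2*R))) *
        Real.exp (-((((k:ℝ)+1) * π) ^ 2 / (4*R^2)) * t / 2)) y := by
    intro y
    exact hasDerivAt_tsum hu1 hF hbound1 hS0' y
  have hS1' : Summable fun k : ℕ => 1/R * Real.sin (((k:ℝ)+1) * π * (x'+R) / (2*R)) *
      (Real.cos (((k:ℝ)+1) * π * (x+R) / (2*R)) * (((k:ℝ)+1) * π / (2*R))) *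
      Real.exp (-((((k:ℝ)+1) * π) ^ 2 / (4*R^2)) * t / 2) :=
    Summable.of_norm_bounded hu1 (fun k => hbound1 k x)
  have key2 : ∀ y : ℝ, HasDerivAt
      (fun z => ∑' k : ℕ, 1/R * Real.sin (((k:ℝ)+1) * π * (x'+R) / (2*R)) *
        (Real.cos (((k:ℝ)+1) * π * (z+R) / (2*R)) * (((k:ℝ)+1) * π / (2*R))) *
        Real.exp (-((((k:ℝ)+1) * π) ^ 2 / (4*R^2)) * t / 2))
      (∑' k : ℕ, 1/R * Real.sin (((k:ℝ)+1) * π * (x'+R) / (2*R)) *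
        (-Real.sin (((k:ℝ)+1) * π * (y+R) / (2*R)) * (((k:ℝ)+1) * π / (2*R)) *
          (((k:ℝ)+1) * π / (2*R))) *
        Real.exp (-((((k:ℝ)+1) * π) ^ 2 / (4*R^2)) * t / 2)) y := by
    intro y
    exact hasDerivAt_tsum hu2 hF' hbound2 hS1' y
  have hfx : (fun y => f₁ R x' y t) =
      fun z => ∑' k : ℕ, 1/R * Real.sin (((k:ℝ)+1) * π * (x'+R) / (2*R)) *
        Real.sin (((k:ℝ)+1) * π * (z+R) / (2*R)) *
        Real.exp (-((((k:ℝ)+1) * π) ^ 2 / (4*R^2)) * t / 2) := rfl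
  have hderiv1 : deriv (fun y => f₁ R x' y t) =
      fun y => ∑' k : ℕ, 1/R * Real.sin (((k:ℝ)+1) * π * (x'+R) / (2*R)) *
        (Real.cos (((k:ℝ)+1) * π * (y+R) / (2*R)) * (((k:ℝ)+1) * π / (2*R))) *
        Real.exp (-((((k:ℝ)+1) * π) ^ 2 / (4*R^2)) * t / 2) := by
    funext y
    rw [hfx]
    exact (key1 y).deriv
  -- time derivative
  have hinnerT : ∀ (k : ℕ) (s : ℝ), HasDerivAt
      (fun s : ℝ => -((((k:ℝ)+1) * π) ^ 2 / (4*R^2)) * s / 2)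
      (-((((k:ℝ)+1) * π) ^ 2 / (4*R^2)) / 2) s := by
    intro k s
    have h := ((hasDerivAt_id' (x := s)).const_mul (-((((k:ℝ)+1) * π) ^ 2 / (4*R^2)))).div_const 2
    exact h.congr_deriv (by ring)
  have hG : ∀ (k : ℕ) (s : ℝ), HasDerivAt
      (fun s => 1/R * Real.sin (((k:ℝ)+1) * π * (x'+R) / (2*R)) *
        Real.sin (((k:ℝ)+1) * π * (x+R) / (2*R)) *
        Real.exp (-((((k:ℝ)+1) * π) ^ 2 / (4*R^2)) * s / 2))
      (1/R * Real.sin (((k:ℝ)+1) * π * (x'+R) / (2*R)) *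
        Real.sin (((k:ℝ)+1) * π * (x+R) / (2*R)) *
        (Real.exp (-((((k:ℝ)+1) * π) ^ 2 / (4*R^2)) * s / 2) *
          (-((((k:ℝ)+1) * π) ^ 2 / (4*R^2)) / 2))) s := by
    intro k s
    exact ((Real.hasDerivAt_exp _).comp s (hinnerT k s)).const_mul _
  have hv : Summable fun k : ℕ => 1/R *
      (Real.exp (-((((k:ℝ)+1) * π) ^ 2 / (4*R^2)) * (t/2/2)) *
        ((((k:ℝ)+1) * π) ^ 2 / (4*R^2) / 2)) := by
    have heq : (fun k : ℕ => 1/R *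
        (Real.exp (-((((k:ℝ)+1) * π) ^ 2 / (4*R^2)) * (t/2/2)) *
          ((((k:ℝ)+1) * π) ^ 2 / (4*R^2) / 2))) =
        fun k : ℕ => (π^2 / (8*R^3)) * (((k:ℝ)+1) ^ 2 *
          Real.exp (-((((k:ℝ)+1) * π) ^ 2 / (4*R^2)) * (t/2/2))) := by
      funext k; field_simp; ring
    rw [heq]; exact S2'.mul_left _
  have hboundT : ∀ (k : ℕ), ∀ s ∈ Set.Ioi (t/2),
      ‖1/R * Real.sin (((k:ℝ)+1) * π * (x'+R) / (2*R)) *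
        Real.sin (((k:ℝ)+1) * π * (x+R) / (2*R)) *
        (Real.exp (-((((k:ℝ)+1) * π) ^ 2 / (4*R^2)) * s / 2) *
          (-((((k:ℝ)+1) * π) ^ 2 / (4*R^2)) / 2))‖ ≤
      1/R * (Real.exp (-((((k:ℝ)+1) * π) ^ 2 / (4*R^2)) * (t/2/2)) *
        ((((k:ℝ)+1) * π) ^ 2 / (4*R^2) / 2)) := by
    intro k s hs
    rw [Set.mem_Ioi] at hs
    rw [Real.norm_eq_abs]
    refine hk_abs_helper2 (by positivity) (Real.abs_sin_le_one _) (Real.abs_sin_le_one _) ?_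
    rw [abs_mul, Real.abs_exp]
    have h1 : |(-((((k:ℝ)+1) * π) ^ 2 / (4*R^2)) / 2)| = (((k:ℝ)+1) * π) ^ 2 / (4*R^2) / 2 := by
      rw [abs_div, abs_neg, abs_of_pos (show (0:ℝ) < (((k:ℝ)+1) * π) ^ 2 / (4*R^2) by positivity)]
      norm_num
    rw [h1]
    have h2 : Real.exp (-((((k:ℝ)+1) * π) ^ 2 / (4*R^2)) * s / 2) ≤
        Real.exp (-((((k:ℝ)+1) * π) ^ 2 / (4*R^2)) * (t/2/2)) := by
      rw [Real.exp_le_exp]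
      have hμ : (0:ℝ) ≤ (((k:ℝ)+1) * π) ^ 2 / (4*R^2) := by positivity
      nlinarith
    exact mul_le_mul_of_nonneg_right h2 (by positivity)
  have keyT : HasDerivAt
      (fun s => ∑' k : ℕ, 1/R * Real.sin (((k:ℝ)+1) * π * (x'+R) / (2*R)) *
        Real.sin (((k:ℝ)+1) * π * (x+R) / (2*R)) *
        Real.exp (-((((k:ℝ)+1) * π) ^ 2 / (4*R^2)) * s / 2))
      (∑' k : ℕ, 1/R * Real.sin (((k:ℝ)+1) * π * (x'+R) / (2*R)) *
        Real.sin (((k:ℝ)+1) * π * (x+R) / (2*R)) *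
        (Real.exp (-((((k:ℝ)+1) * π) ^ 2 / (4*R^2)) * t / 2) *
          (-((((k:ℝ)+1) * π) ^ 2 / (4*R^2)) / 2))) t := by
    refine hasDerivAt_tsum_of_isPreconnected hv isOpen_Ioi isPreconnected_Ioi
      (fun k s _ => hG k s) hboundT ?_ hS0' ?_
    · rw [Set.mem_Ioi]; linarith
    · rw [Set.mem_Ioi]; linarith
  have hft : (fun s => f₁ R x' x s) =
      fun s => ∑' k : ℕ, 1/R * Real.sin (((k:ℝ)+1) * π * (x'+R) / (2*R)) *
        Real.sin (((k:ℝ)+1) * π * (x+R) / (2*R)) *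
        Real.exp (-((((k:ℝ)+1) * π) ^ 2 / (4*R^2)) * s / 2) := rfl
  refine ⟨?_, ?_, ?_, ?_⟩
  · rw [hft]; exact keyT.differentiableAt
  · rw [hfx]; exact (key1 x).differentiableAt
  · rw [hderiv1]; exact (key2 x).differentiableAt
  · have e1 : deriv (fun s => f₁ R x' x s) t =
        ∑' k : ℕ, 1/R * Real.sin (((k:ℝ)+1) * π * (x'+R) / (2*R)) *
          Real.sin (((k:ℝ)+1) * π * (x+R) / (2*R)) *
          (Real.exp (-((((k:ℝ)+1) * π) ^ 2 / (4*R^2)) * t / 2) *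
            (-((((k:ℝ)+1) * π) ^ 2 / (4*R^2)) / 2)) := by
      rw [hft]; exact keyT.deriv
    have e2 : deriv (deriv (fun y => f₁ R x' y t)) x =
        ∑' k : ℕ, 1/R * Real.sin (((k:ℝ)+1) * π * (x'+R) / (2*R)) *
          (-Real.sin (((k:ℝ)+1) * π * (x+R) / (2*R)) * (((k:ℝ)+1) * π / (2*R)) *
            (((k:ℝ)+1) * π / (2*R))) *
          Real.exp (-((((k:ℝ)+1) * π) ^ 2 / (4*R^2)) * t / 2) := by
      rw [hderiv1]; exact (key2 x).deriv
    rw [e1, e2, ← tsum_mul_left]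
    refine tsum_congr fun k => ?_
    have hb2 : (((k:ℝ)+1) * π) ^ 2 / (4*R^2) =
        (((k:ℝ)+1) * π / (2*R)) * (((k:ℝ)+1) * π / (2*R)) := by
      field_simp; ring
    rw [hb2]
    ring
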